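/- Suppose A ∈ ℂ^{D×N} has column blocks A^i, let B be the horizontal concatenation of the matrices (U^i Σ^i) obtained from rank-d truncated SVDs of the blocks (so the i-th block of B equals (A^i)_d V^i for unitary V^i extending the right singular vectors), let Ψ ∈ ℂ^{D×N} be arbitrary, and set B' = B + Ψ. Then there exists a unitary matrix W of size N×N such that ‖ (B')_d V' − A W ‖_F ≤ 3√2 ‖(A)_d − A‖_F + (1+√2) ‖Ψ‖_F, where (B')_d V' denotes (B')_d right-multiplied by (the conjugate transpose of) a matrix of right singular vectors of (B')_d. -/

import Mathlib

open Matrix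

/-- Frobenius norm of a complex matrix. -/
noncomputable def frob {m n : Type*} [Fintype m] [Fintype n] (M : Matrix m n ℂ) : ℝ :=
  Real.sqrt (∑ i, ∑ j, ‖M i j‖ ^ 2)

/-- `B` is a best rank-`d` approximation of `A` in Frobenius norm. -/
def IsBestRankApprox {m n : Type*} [Fintype m] [Fintype n] (d : ℕ)
    (A B : Matrix m n ℂ) : Prop :=
  B.rank ≤ d ∧ ∀ C : Matrix m n ℂ, C.rank ≤ d → frob (B - A) ≤ frob (C - A)

/-- The singular values of `M` : nonnegative square roots of the eigenvalues of `M * Mᴴ`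
(unsorted enumeration). -/
noncomputable def singVals {D : ℕ} {n : Type*} [Fintype n] (M : Matrix (Fin D) n ℂ) :
    Fin D → ℝ :=
  fun i => Real.sqrt ((Matrix.isHermitian_mul_conjTranspose_self M).eigenvalues i)

/-- `C` is a scaled left-singular-vector form of `M`, i.e. `C = U Σ = M V` for some
SVD `M = U Σ Vᴴ` of `M`: equivalently `C = M V` with `V` unitary and `Cᴴ C` diagonal with
nonnegative real entries. -/
def IsScaledLeftSV {D : ℕ} {n : Type*} [Fintype n] [DecidableEq n]
    (M C : Matrix (Fin D) n ℂ) : Prop :=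
  ∃ V ∈ Matrix.unitaryGroup n ℂ, C = M * V ∧
    ∃ t : n → ℝ, (∀ j, 0 ≤ t j) ∧ Cᴴ * C = Matrix.diagonal (fun j => (t j : ℂ))
section Aux

variable {m n : Type*} [Fintype m] [Fintype n]

/-- view a matrix as a Euclidean vector -/
noncomputable def toE (M : Matrix m n ℂ) : EuclideanSpace ℂ (m × n) :=
  (WithLp.equiv 2 _).symm (fun p => M p.1 p.2)

lemma toE_sub (X Y : Matrix m n ℂ) : toE (X - Y) = toE X - toE Y := rfl

lemma toE_add (X Y : Matrix m n ℂ) : toE (X + Y) = toE X + toE Y := rfl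

lemma frob_eq_norm (M : Matrix m n ℂ) : frob M = ‖toE M‖ := by
  rw [EuclideanSpace.norm_eq, frob]
  congr 1
  exact (Fintype.sum_prod_type (f := fun p => ‖toE M p‖ ^ 2)).symm

lemma frob_nonneg (M : Matrix m n ℂ) : 0 ≤ frob M := Real.sqrt_nonneg _

lemma frob_add_le (X Y : Matrix m n ℂ) : frob (X + Y) ≤ frob X + frob Y := by
  simp only [frob_eq_norm, toE_add]
  exact norm_add_le _ _

lemma frob_sub_comm (X Y : Matrix m n ℂ) : frob (X - Y) = frob (Y - X) := by
  simp only [frob_eq_norm, toE_sub]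
  rw [← neg_sub (toE Y) (toE X), norm_neg]

lemma frob_neg (X : Matrix m n ℂ) : frob (-X) = frob X := by
  have := frob_sub_comm (0 : Matrix m n ℂ) X
  simpa using this

lemma trace_form (X : Matrix m n ℂ) :
    ((Xᴴ * X).trace).re = ∑ i, ∑ j, ‖X i j‖ ^ 2 := by
  have hz : ∀ z : ℂ, ((starRingEnd ℂ) z * z).re = ‖z‖ ^ 2 := by
    intro z
    rw [mul_comm, Complex.mul_conj, Complex.ofReal_re, Complex.normSq_eq_norm_sq]
  have h : (Xᴴ * X).trace = ∑ j, ∑ i, ((starRingEnd ℂ) (X i j) * X i j) := by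
    simp [Matrix.trace, Matrix.diag, Matrix.mul_apply, Matrix.conjTranspose_apply]
  rw [h, Complex.re_sum]
  simp_rw [Complex.re_sum, hz]
  exact Finset.sum_comm

lemma frob_eq_trace (X : Matrix m n ℂ) :
    frob X = Real.sqrt (((Xᴴ * X).trace).re) := by
  rw [frob, trace_form]

lemma frob_mul_unitary [DecidableEq n] (M : Matrix m n ℂ) (V : Matrix n n ℂ)
    (hV : V ∈ Matrix.unitaryGroup n ℂ) : frob (M * V) = frob M := by
  rw [frob_eq_trace, frob_eq_trace]
  congr 2
  have hVV : V * Vᴴ = 1 := by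
    have := (Matrix.mem_unitaryGroup_iff).mp hV
    simpa [Matrix.star_eq_conjTranspose] using this
  calc ((M * V)ᴴ * (M * V)).trace
      = (Vᴴ * (Mᴴ * M) * V).trace := by
        rw [Matrix.conjTranspose_mul]
        congr 1
        rw [Matrix.mul_assoc, Matrix.mul_assoc, Matrix.mul_assoc]
    _ = (V * Vᴴ * (Mᴴ * M)).trace := by
        rw [Matrix.trace_mul_cycle]
    _ = (Mᴴ * M).trace := by rw [hVV, Matrix.one_mul]

lemma frob_sq (M : Matrix m n ℂ) : frob M ^ 2 = ∑ i, ∑ j, ‖M i j‖ ^ 2 := by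
  rw [frob, Real.sq_sqrt]
  positivity

lemma frob_le_of_sq_le (X : Matrix m n ℂ) {m' n' : Type*} [Fintype m'] [Fintype n']
    (Y : Matrix m' n' ℂ) (h : frob X ^ 2 ≤ frob Y ^ 2) : frob X ≤ frob Y := by
  have h1 := Real.sqrt_le_sqrt h
  rwa [Real.sqrt_sq (frob_nonneg X), Real.sqrt_sq (frob_nonneg Y)] at h1

end Aux

section Blocks

variable {m : Type*} [Fintype m] {ι : Type*} [Fintype ι] [DecidableEq ι]
  {n' : ι → Type*} [∀ i, Fintype (n' i)]

lemma frob_sq_blocks (X : Matrix m ((i : ι) × n' i) ℂ) :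
    frob X ^ 2 = ∑ i, frob (Matrix.of fun r c => X r ⟨i, c⟩) ^ 2 := by
  simp_rw [frob_sq]
  rw [Finset.sum_comm, ← Finset.univ_sigma_univ, Finset.sum_sigma]
  refine Finset.sum_congr rfl fun i _ => ?_
  rw [Finset.sum_comm]
  rfl

lemma mul_blockDiagonal'_apply (X : Matrix m ((i : ι) × n' i) ℂ)
    (V : ∀ i, Matrix (n' i) (n' i) ℂ) (r : m) (i : ι) (c : n' i) :
    (X * Matrix.blockDiagonal' V) r ⟨i, c⟩ = ∑ c', X r ⟨i, c'⟩ * V i c' c := by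
  rw [Matrix.mul_apply, ← Finset.univ_sigma_univ, Finset.sum_sigma]
  rw [Finset.sum_eq_single i]
  · simp
  · intro b _ hb
    apply Finset.sum_eq_zero
    intro c' _
    rw [Matrix.blockDiagonal'_apply_ne _ _ _ hb, mul_zero]
  · simp

lemma submatrix_col_rank_le {n : Type*} [Fintype n] [DecidableEq n] {p : Type*} [Fintype p]
    (X : Matrix m n ℂ) (g : p → n) : (X.submatrix id g).rank ≤ X.rank := by
  have : X.submatrix id g = X * (1 : Matrix n n ℂ).submatrix id g := by
    ext r c
    simp [Matrix.mul_apply, Matrix.one_apply]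
  rw [this]
  exact Matrix.rank_mul_le_left _ _

end Blocks

/-- Stability of the one-level merge: if each block of `B` is a scaled left-singular-vector form
of a best rank-`d` approximation of the corresponding block of `A`, `B' = B + Ψ`, and `C` is a
scaled left-singular-vector form of a best rank-`d` approximation of `B'`, then there is a
unitary `W` with `‖C − A W‖_F ≤ 3√2 ‖(A)_d − A‖_F + (1+√2) ‖Ψ‖_F`. -/
theorem stmt8 {D M : ℕ} {N : Fin M → ℕ} (d : ℕ) (hd1 : 1 ≤ d) (hdD : d ≤ D)
    (A B Ψ : Matrix (Fin D) ((i : Fin M) × Fin (N i)) ℂ)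
    (hB : ∀ i, ∃ Adi : Matrix (Fin D) (Fin (N i)) ℂ,
            IsBestRankApprox d (Matrix.of fun r c => A r ⟨i, c⟩) Adi ∧
            IsScaledLeftSV Adi (Matrix.of fun r c => B r ⟨i, c⟩))
    (B' : Matrix (Fin D) ((i : Fin M) × Fin (N i)) ℂ) (hB' : B' = B + Ψ)
    (Bd : Matrix (Fin D) ((i : Fin M) × Fin (N i)) ℂ) (hBd : IsBestRankApprox d B' Bd)
    (C : Matrix (Fin D) ((i : Fin M) × Fin (N i)) ℂ) (hC : IsScaledLeftSV Bd C)
    (Ad : Matrix (Fin D) ((i : Fin M) × Fin (N i)) ℂ) (hAd : IsBestRankApprox d A Ad) :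
    ∃ W ∈ Matrix.unitaryGroup ((i : Fin M) × Fin (N i)) ℂ,
      frob (C - A * W) ≤
        3 * Real.sqrt 2 * frob (Ad - A) + (1 + Real.sqrt 2) * frob Ψ := by
  classical
  -- extract the per-block data
  choose Adi hAdi hSLSV using hB
  choose Vi hVimem hrest using hSLSV
  have hBeq : ∀ i, (Matrix.of fun r c => B r ⟨i, c⟩) = Adi i * Vi i := fun i => (hrest i).1
  -- extract the global unitary from hC
  obtain ⟨V, hVmem, hCeq, -⟩ := hC
  -- block diagonal unitary
  set Vb : Matrix ((i : Fin M) × Fin (N i)) ((i : Fin M) × Fin (N i)) ℂ :=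
    Matrix.blockDiagonal' Vi with hVbdef
  have hVbmem : Vb ∈ Matrix.unitaryGroup ((i : Fin M) × Fin (N i)) ℂ := by
    rw [Matrix.mem_unitaryGroup_iff]
    rw [hVbdef, Matrix.star_eq_conjTranspose, Matrix.blockDiagonal'_conjTranspose,
      ← Matrix.blockDiagonal'_mul]
    have : (fun i => Vi i * (Vi i)ᴴ) = fun i : Fin M => (1 : Matrix (Fin (N i)) (Fin (N i)) ℂ) := by
      funext i
      have := (Matrix.mem_unitaryGroup_iff).mp (hVimem i)
      simpa [Matrix.star_eq_conjTranspose] using this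
    rw [this]
    exact Matrix.blockDiagonal'_one
  -- the concatenation of the per-block best approximations
  set Ah : Matrix (Fin D) ((i : Fin M) × Fin (N i)) ℂ :=
    Matrix.of (fun r p => Adi p.1 r p.2) with hAhdef
  have hBfact : B = Ah * Vb := by
    ext r p
    obtain ⟨i, c⟩ := p
    rw [hVbdef, mul_blockDiagonal'_apply]
    have h1 : B r ⟨i, c⟩ = (Adi i * Vi i) r c := by
      have := congrFun (congrFun (hBeq i) r) c
      simpa using this
    rw [h1, Matrix.mul_apply]
    rfl
  -- abbreviations
  set a : ℝ := frob (Ad - A) with hadef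
  set p : ℝ := frob Ψ with hpdef
  have ha0 : 0 ≤ a := frob_nonneg _
  have hp0 : 0 ≤ p := frob_nonneg _
  -- key blockwise estimate : ‖Ah − A‖ ≤ ‖Ad − A‖
  have hAhA : frob (Ah - A) ≤ a := by
    apply frob_le_of_sq_le
    rw [frob_sq_blocks (Ah - A), frob_sq_blocks (Ad - A)]
    apply Finset.sum_le_sum
    intro i _
    have hblock : (Matrix.of fun r c => (Ah - A) r ⟨i, c⟩)
        = Adi i - (Matrix.of fun r c => A r ⟨i, c⟩) := by
      ext r c; simp [hAhdef, Matrix.sub_apply]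
    have hblock2 : (Matrix.of fun r c => (Ad - A) r ⟨i, c⟩)
        = (Matrix.of fun r c => Ad r ⟨i, c⟩) - (Matrix.of fun r c => A r ⟨i, c⟩) := by
      ext r c; simp [Matrix.sub_apply]
    rw [hblock, hblock2]
    have hrank : (Matrix.of fun r c => Ad r ⟨i, c⟩ : Matrix (Fin D) (Fin (N i)) ℂ).rank ≤ d := by
      have : (Matrix.of fun r c => Ad r ⟨i, c⟩ : Matrix (Fin D) (Fin (N i)) ℂ)
          = Ad.submatrix id (Sigma.mk i) := rfl
      rw [this]
      exact le_trans (submatrix_col_rank_le Ad (Sigma.mk i)) hAd.1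
    have hopt := (hAdi i).2 _ hrank
    exact pow_le_pow_left₀ (frob_nonneg _) hopt 2
  -- ‖Ad − Ah‖ ≤ 2a
  have hAdAh : frob (Ad - Ah) ≤ 2 * a := by
    have h1 : Ad - Ah = (Ad - A) + (A - Ah) := by abel
    rw [h1]
    calc frob ((Ad - A) + (A - Ah)) ≤ frob (Ad - A) + frob (A - Ah) := frob_add_le _ _
      _ ≤ a + a := by
          rw [frob_sub_comm A Ah]
          exact add_le_add le_rfl hAhA
      _ = 2 * a := by ring
  -- ‖Bd − B'‖ ≤ 2a + p
  have hBdB' : frob (Bd - B') ≤ 2 * a + p := by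
    have hrk : (Ad * Vb).rank ≤ d := le_trans (Matrix.rank_mul_le_left _ _) hAd.1
    have h1 : frob (Bd - B') ≤ frob (Ad * Vb - B') := hBd.2 _ hrk
    have h2 : Ad * Vb - B' = (Ad - Ah) * Vb + (-Ψ) := by
      rw [hB', hBfact, Matrix.sub_mul]; abel
    calc frob (Bd - B') ≤ frob (Ad * Vb - B') := h1
      _ = frob ((Ad - Ah) * Vb + (-Ψ)) := by rw [h2]
      _ ≤ frob ((Ad - Ah) * Vb) + frob (-Ψ) := frob_add_le _ _
      _ = frob (Ad - Ah) + p := by rw [frob_mul_unitary _ _ hVbmem, frob_neg]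
      _ ≤ 2 * a + p := by exact add_le_add hAdAh le_rfl
  -- the unitary we use
  refine ⟨Vb * V, mul_mem hVbmem hVmem, ?_⟩
  have hmain : frob (C - A * (Vb * V)) = frob (Bd - A * Vb) := by
    have h1 : C - A * (Vb * V) = (Bd - A * Vb) * V := by
      rw [hCeq, Matrix.sub_mul, Matrix.mul_assoc]
    rw [h1, frob_mul_unitary _ _ hVmem]
  rw [hmain]
  have hdecomp : Bd - A * Vb = (Bd - B') + Ψ + (Ah - A) * Vb := by
    rw [hB', hBfact, Matrix.sub_mul]; abel
  have hbound : frob (Bd - A * Vb) ≤ 3 * a + 2 * p := by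
    calc frob (Bd - A * Vb) = frob ((Bd - B') + Ψ + (Ah - A) * Vb) := by rw [hdecomp]
      _ ≤ frob ((Bd - B') + Ψ) + frob ((Ah - A) * Vb) := frob_add_le _ _
      _ ≤ frob (Bd - B') + frob Ψ + frob ((Ah - A) * Vb) :=
          add_le_add (frob_add_le _ _) le_rfl
      _ = frob (Bd - B') + p + frob (Ah - A) := by rw [frob_mul_unitary _ _ hVbmem]
      _ ≤ (2 * a + p) + p + a := add_le_add (add_le_add hBdB' le_rfl) hAhA
      _ = 3 * a + 2 * p := by ring
  refine le_trans hbound ?_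
  have hs : (1 : ℝ) ≤ Real.sqrt 2 := by
    rw [show (1 : ℝ) = Real.sqrt 1 by simp]
    exact Real.sqrt_le_sqrt (by norm_num)
  nlinarith [ha0, hp0, hs]
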